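/- In paraclassical propositional logic, modus ponens fails: there exist A ⊆ X and formulas a, b with a ∈ Cn_P(A) and (a → b) ∈ Cn_P(A) but b ∉ Cn_P(A). For instance, with A = {p, ¬p, p → (q ∧ ¬q)}, no Cn-consistent subset of A entails q ∧ ¬q. -/

import Mathlib

/-- Paraconsistentization of a consequence operator. -/
def CnP {X : Type} (Cn : Set X → Set X) (A : Set X) : Set X :=
  {x | ∃ A' : Set X, A' ⊆ A ∧ Cn A' ≠ Set.univ ∧ x ∈ Cn A'}

/-- Homomorphism of consequence structures. -/
def IsHom {X X' : Type} (Cn : Set X → Set X) (Cn' : Set X' → Set X') (h : X → X') : Prop :=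
  Function.Injective h ∧ ∀ A : Set X, h '' Cn A = Cn' (h '' A)
/-- Classical propositional formulas. -/
inductive PropForm : Type where
  | var : Nat → PropForm
  | neg : PropForm → PropForm
  | conj : PropForm → PropForm → PropForm
  | disj : PropForm → PropForm → PropForm
  | impl : PropForm → PropForm → PropForm

/-- Truth-value of a formula under a valuation. -/
def PropForm.eval (v : Nat → Bool) : PropForm → Bool
  | var n => v n
  | neg a => !a.eval v
  | conj a b => a.eval v && b.eval v
  | disj a b => a.eval v || b.eval v
  | impl a b => !a.eval v || b.eval v

/-- The classical consequence operator. -/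
def Cn (A : Set PropForm) : Set PropForm :=
  {b | ∀ v : Nat → Bool, (∀ a ∈ A, a.eval v = true) → b.eval v = true}
theorem stmt18 :
    ∃ (A : Set PropForm) (a b : PropForm),
      a ∈ CnP Cn A ∧ PropForm.impl a b ∈ CnP Cn A ∧ b ∉ CnP Cn A := by
  classical
  set p := PropForm.var 0
  set q := PropForm.var 1
  set b := PropForm.conj q (PropForm.neg q)
  refine ⟨{p, PropForm.impl p b}, p, b, ?_, ?_, ?_⟩
  · refine ⟨{p}, by simp, ?_, ?_⟩
    · intro h
      have : PropForm.neg p ∈ Cn {p} := h ▸ Set.mem_univ _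
      have := this (fun _ => true) (by intro a ha; simp_all [PropForm.eval, p])
      simp [PropForm.eval, p] at this
    · intro v hv; exact hv p rfl
  · refine ⟨{PropForm.impl p b}, by simp, ?_, ?_⟩
    · intro h
      have : p ∈ Cn {PropForm.impl p b} := h ▸ Set.mem_univ _
      have := this (fun _ => false) (by intro a ha; simp_all [PropForm.eval, p])
      simp [PropForm.eval, p] at this
    · intro v hv; exact hv _ rfl
  · rintro ⟨A', -, hne, hb⟩
    have hsat : ∃ v : Nat → Bool, ∀ a ∈ A', PropForm.eval v a = true := by
      by_contra h
      push_neg at h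
      apply hne
      ext x
      simp only [Set.mem_univ, iff_true]
      intro v hv
      obtain ⟨a, ha, ha'⟩ := h v
      exact absurd (hv a ha) ha'
    obtain ⟨v, hv⟩ := hsat
    have := hb v hv
    simp [PropForm.eval, b, q] at this
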